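/- Let F : ℝ → ℂ be four times continuously differentiable on [0,h] with all derivatives up to order 4 bounded by M, and let p be the cubic Hermite interpolant of F at the endpoints. Then there is a constant C depending only on M (not on h or ω) such that for every ω > 0 and nonzero integer n, ‖∫₀^h (F − p)(τ) e^{i n ω τ} dτ‖ ≤ C · min(h⁵, h³/ω²). -/

import Mathlib

open Complex Set intervalIntegral MeasureTheory

/-- FTC on [0,h] with derivatives within the set. -/
lemma ftc_aux {h : ℝ} {g g' : ℝ → ℂ}
    (hg : ContinuousOn g (Icc 0 h)) (hg' : ContinuousOn g' (Icc 0 h))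
    (hd : ∀ t ∈ Icc (0:ℝ) h, HasDerivWithinAt g (g' t) (Icc 0 h) t) :
    ∀ t ∈ Icc (0:ℝ) h, ∫ σ in (0:ℝ)..t, g' σ = g t - g 0 := by
  intro t ht
  obtain ⟨ht0, hth⟩ := ht
  apply intervalIntegral.integral_eq_sub_of_hasDeriv_right_of_le ht0
  · exact hg.mono (Icc_subset_Icc le_rfl hth)
  · intro x hx
    have hxmem : x ∈ Icc (0:ℝ) h := ⟨hx.1.le, hx.2.le.trans hth⟩
    have : HasDerivAt g (g' x) x :=
      (hd x hxmem).hasDerivAt (Icc_mem_nhds hx.1 (lt_of_lt_of_le hx.2 hth))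
    exact this.hasDerivWithinAt
  · apply ContinuousOn.intervalIntegrable
    rw [uIcc_of_le ht0]
    exact hg'.mono (Icc_subset_Icc le_rfl hth)

/-- norm bound for integral over [0,t] ⊆ [0,h]. -/
lemma int_norm_le {h t B : ℝ} (hB : 0 ≤ B) (ht : t ∈ Icc (0:ℝ) h) {g : ℝ → ℂ}
    (hg : ∀ σ ∈ Icc (0:ℝ) h, ‖g σ‖ ≤ B) :
    ‖∫ σ in (0:ℝ)..t, g σ‖ ≤ B * h := by
  have h1 : ‖∫ σ in (0:ℝ)..t, g σ‖ ≤ B * |t - 0| := by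
    apply intervalIntegral.norm_integral_le_of_norm_le_const
    intro x hx
    rw [uIoc_of_le ht.1] at hx
    exact hg x ⟨hx.1.le, hx.2.trans ht.2⟩
  calc ‖∫ σ in (0:ℝ)..t, g σ‖ ≤ B * |t - 0| := h1
    _ ≤ B * h := by
        rw [sub_zero, _root_.abs_of_nonneg ht.1]
        exact mul_le_mul_of_nonneg_left ht.2 hB

lemma poly_deriv_aux (e30 : ℂ) (k : ℕ) (r : ℝ) (t : ℝ) :
    HasDerivAt (fun u : ℝ => ((u:ℂ)^k / r) * e30) ((k * (t:ℂ)^(k-1) / r) * e30) t := by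
  have H : HasDerivAt (fun z : ℂ => (z^k / r) * e30) ((k * (t:ℂ)^(k-1) / r) * e30) (t:ℂ) :=
    (((hasDerivAt_pow k (t:ℂ)).div_const r).mul_const e30)
  exact H.comp_ofReal

lemma lin_deriv_aux (e30 : ℂ) (t : ℝ) :
    HasDerivAt (fun u : ℝ => (u:ℂ) * e30) e30 t := by
  simpa using (Complex.ofRealCLM.hasDerivAt.mul_const e30)

lemma core_bounds {h M : ℝ} (hh : 0 < h) (hM : 0 ≤ M)
    {e0 e1 e2 e3 e4 : ℝ → ℂ}
    (hc0 : ContinuousOn e0 (Icc 0 h)) (hc1 : ContinuousOn e1 (Icc 0 h))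
    (hc2 : ContinuousOn e2 (Icc 0 h)) (hc3 : ContinuousOn e3 (Icc 0 h))
    (hc4 : ContinuousOn e4 (Icc 0 h))
    (hd0 : ∀ t ∈ Icc (0:ℝ) h, HasDerivWithinAt e0 (e1 t) (Icc 0 h) t)
    (hd1 : ∀ t ∈ Icc (0:ℝ) h, HasDerivWithinAt e1 (e2 t) (Icc 0 h) t)
    (hd2 : ∀ t ∈ Icc (0:ℝ) h, HasDerivWithinAt e2 (e3 t) (Icc 0 h) t)
    (hd3 : ∀ t ∈ Icc (0:ℝ) h, HasDerivWithinAt e3 (e4 t) (Icc 0 h) t)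
    (hb4 : ∀ t ∈ Icc (0:ℝ) h, ‖e4 t‖ ≤ M)
    (h00 : e0 0 = 0) (h0h : e0 h = 0) (h10 : e1 0 = 0) (h1h : e1 h = 0) :
    (∀ t ∈ Icc (0:ℝ) h, ‖e2 t‖ ≤ 29 * M * h ^ 2) ∧
    (∀ t ∈ Icc (0:ℝ) h, ‖e0 t‖ ≤ 9 * M * h ^ 4) := by
  have h0s : (0:ℝ) ∈ Icc (0:ℝ) h := ⟨le_rfl, hh.le⟩
  have hhs : h ∈ Icc (0:ℝ) h := ⟨hh.le, le_rfl⟩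
  -- e3 bound
  have b3 : ∀ t ∈ Icc (0:ℝ) h, ‖e3 t - e3 0‖ ≤ M * h := by
    intro t ht
    rw [← ftc_aux hc3 hc4 hd3 t ht]
    exact int_norm_le hM ht hb4
  -- g2
  set g2 : ℝ → ℂ := fun t => e2 t - e2 0 - (t:ℂ) * e3 0 with hg2
  have hdg2 : ∀ t ∈ Icc (0:ℝ) h, HasDerivWithinAt g2 (e3 t - e3 0) (Icc 0 h) t := by
    intro t ht
    exact ((hd2 t ht).sub_const (e2 0)).sub (lin_deriv_aux (e3 0) t).hasDerivWithinAt
  have hcg2 : ContinuousOn g2 (Icc 0 h) := by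
    apply ContinuousOn.sub (hc2.sub continuousOn_const)
    exact (Complex.continuous_ofReal.continuousOn.mul continuousOn_const)
  have b2 : ∀ t ∈ Icc (0:ℝ) h, ‖g2 t‖ ≤ M * h * h := by
    intro t ht
    have := ftc_aux hcg2 (hc3.sub continuousOn_const) hdg2 t ht
    have hz : g2 0 = 0 := by simp [hg2]
    rw [hz, sub_zero] at this
    rw [← this]
    exact int_norm_le (by positivity) ht b3
  -- g1
  set g1 : ℝ → ℂ := fun t => e1 t - (t:ℂ) * e2 0 - ((t:ℂ)^2 / 2) * e3 0 with hg1
  have hdg1 : ∀ t ∈ Icc (0:ℝ) h, HasDerivWithinAt g1 (g2 t) (Icc 0 h) t := by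
    intro t ht
    have H := ((hd1 t ht).sub (lin_deriv_aux (e2 0) t).hasDerivWithinAt).sub
      (poly_deriv_aux (e3 0) 2 2 t).hasDerivWithinAt
    refine H.congr_deriv ?_
    simp only [hg2]; push_cast; ring
  have hcg1 : ContinuousOn g1 (Icc 0 h) := by
    apply ContinuousOn.sub; apply ContinuousOn.sub hc1
    · exact Complex.continuous_ofReal.continuousOn.mul continuousOn_const
    · exact (((Complex.continuous_ofReal.pow 2).div_const 2).continuousOn).mul continuousOn_const
  have b1 : ∀ t ∈ Icc (0:ℝ) h, ‖g1 t‖ ≤ M * h * h * h := by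
    intro t ht
    have := ftc_aux hcg1 hcg2 hdg1 t ht
    have hz : g1 0 = 0 := by simp [hg1, h10]
    rw [hz, sub_zero] at this
    rw [← this]
    exact int_norm_le (by positivity) ht b2
  -- g0
  set g0 : ℝ → ℂ := fun t => e0 t - ((t:ℂ)^2 / 2) * e2 0 - ((t:ℂ)^3 / 6) * e3 0 with hg0
  have hdg0 : ∀ t ∈ Icc (0:ℝ) h, HasDerivWithinAt g0 (g1 t) (Icc 0 h) t := by
    intro t ht
    have H := ((hd0 t ht).sub (poly_deriv_aux (e2 0) 2 2 t).hasDerivWithinAt).sub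
      (poly_deriv_aux (e3 0) 3 6 t).hasDerivWithinAt
    refine H.congr_deriv ?_
    simp only [hg1]; push_cast; ring
  have hcg0 : ContinuousOn g0 (Icc 0 h) := by
    apply ContinuousOn.sub; apply ContinuousOn.sub hc0
    · exact (((Complex.continuous_ofReal.pow 2).div_const 2).continuousOn).mul continuousOn_const
    · exact (((Complex.continuous_ofReal.pow 3).div_const 6).continuousOn).mul continuousOn_const
  have b0 : ∀ t ∈ Icc (0:ℝ) h, ‖g0 t‖ ≤ M * h * h * h * h := by
    intro t ht
    have := ftc_aux hcg0 hcg1 hdg0 t ht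
    have hz : g0 0 = 0 := by simp [hg0, h00]
    rw [hz, sub_zero] at this
    rw [← this]
    exact int_norm_le (by positivity) ht b1
  -- the two endpoint equations
  have hhC : (h:ℂ) ≠ 0 := by exact_mod_cast hh.ne'
  have eqK : (h:ℂ) * e2 0 + (h:ℂ)^2/2 * e3 0 = -g1 h := by
    have : g1 h = e1 h - (h:ℂ) * e2 0 - ((h:ℂ)^2 / 2) * e3 0 := rfl
    rw [h1h] at this; rw [this]; ring
  have eqL : (h:ℂ)^2/2 * e2 0 + (h:ℂ)^3/6 * e3 0 = -g0 h := by
    have : g0 h = e0 h - ((h:ℂ)^2 / 2) * e2 0 - ((h:ℂ)^3 / 6) * e3 0 := rfl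
    rw [h0h] at this; rw [this]; ring
  have hnhC : ‖(h:ℂ)‖ = h := by
    rw [Complex.norm_real, Real.norm_eq_abs, _root_.abs_of_pos hh]
  have hY : (h:ℂ)^3 * e3 0 = 12 * g0 h - 6*(h:ℂ)*g1 h := by
    linear_combination 6*(h:ℂ)*eqK - 12*eqL
  have nY : ‖e3 0‖ ≤ 18 * M * h := by
    have e1n : h^3 * ‖e3 0‖ = ‖12 * g0 h - 6*(h:ℂ)*g1 h‖ := by
      rw [← hY, norm_mul, norm_pow, hnhC]
    have bnd : ‖12 * g0 h - 6*(h:ℂ)*g1 h‖ ≤ 12*(M*h*h*h*h) + 6*h*(M*h*h*h) := by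
      refine (norm_sub_le _ _).trans (add_le_add ?_ ?_)
      · rw [norm_mul]
        have h12 : ‖(12:ℂ)‖ = 12 := by norm_num
        rw [h12]
        exact mul_le_mul_of_nonneg_left (b0 h hhs) (by norm_num)
      · have hn : ‖6*(h:ℂ)*g1 h‖ = 6 * h * ‖g1 h‖ := by
          rw [norm_mul, norm_mul, hnhC]; norm_num
        rw [hn]
        have hb := b1 h hhs
        nlinarith [norm_nonneg (g1 h)]
    have h3pos : (0:ℝ) < h^3 := by positivity
    nlinarith [e1n, bnd]
  have nX : ‖e2 0‖ ≤ 10 * M * h^2 := by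
    have hX : (h:ℂ) * e2 0 = -g1 h - (h:ℂ)^2/2 * e3 0 := by linear_combination eqK
    have e2n : h * ‖e2 0‖ = ‖-g1 h - (h:ℂ)^2/2 * e3 0‖ := by
      rw [← hX, norm_mul, hnhC]
    have bnd : ‖-g1 h - (h:ℂ)^2/2 * e3 0‖ ≤ M*h*h*h + (h^2/2) * (18*M*h) := by
      refine (norm_sub_le _ _).trans (add_le_add ?_ ?_)
      · rw [norm_neg]; exact b1 h hhs
      · rw [norm_mul]
        have : ‖((h:ℂ)^2/2)‖ = h^2/2 := by
          rw [norm_div, norm_pow, hnhC]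
          norm_num
        rw [this]
        exact mul_le_mul_of_nonneg_left nY (by positivity)
    nlinarith [e2n, bnd]
  constructor
  · intro t ht
    have he2 : e2 t = g2 t + e2 0 + (t:ℂ) * e3 0 := by simp [hg2]; ring
    rw [he2]
    have hnt : ‖((t:ℝ):ℂ)‖ = t := by
      rw [Complex.norm_real, Real.norm_eq_abs, _root_.abs_of_nonneg ht.1]
    calc ‖g2 t + e2 0 + (t:ℂ) * e3 0‖
        ≤ ‖g2 t‖ + ‖e2 0‖ + ‖(t:ℂ)‖ * ‖e3 0‖ := by
          refine (norm_add_le _ _).trans ?_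
          rw [norm_mul]
          exact add_le_add_left (norm_add_le _ _) _
      _ ≤ M*h*h + 10*M*h^2 + h * (18*M*h) := by
          refine add_le_add (add_le_add (b2 t ht) nX) ?_
          rw [hnt]
          exact mul_le_mul ht.2 nY (norm_nonneg _) hh.le
      _ = 29 * M * h^2 := by ring
  · intro t ht
    have he0 : e0 t = g0 t + ((t:ℂ)^2/2) * e2 0 + ((t:ℂ)^3/6) * e3 0 := by simp [hg0]; ring
    rw [he0]
    have hnt2 : ‖((t:ℂ)^2/2)‖ ≤ h^2/2 := by
      rw [norm_div, norm_pow, Complex.norm_real, Real.norm_eq_abs,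
        _root_.abs_of_nonneg ht.1]
      have h2 : ‖(2:ℂ)‖ = 2 := by norm_num
      rw [h2]
      have := pow_le_pow_left₀ ht.1 ht.2 2
      linarith
    have hnt3 : ‖((t:ℂ)^3/6)‖ ≤ h^3/6 := by
      rw [norm_div, norm_pow, Complex.norm_real, Real.norm_eq_abs,
        _root_.abs_of_nonneg ht.1]
      have h6 : ‖(6:ℂ)‖ = 6 := by norm_num
      rw [h6]
      have := pow_le_pow_left₀ ht.1 ht.2 3
      linarith
    calc ‖g0 t + ((t:ℂ)^2/2) * e2 0 + ((t:ℂ)^3/6) * e3 0‖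
        ≤ ‖g0 t‖ + ‖((t:ℂ)^2/2)‖ * ‖e2 0‖ + ‖((t:ℂ)^3/6)‖ * ‖e3 0‖ := by
          refine (norm_add_le _ _).trans ?_
          rw [norm_mul]
          refine add_le_add_left ?_ _
          refine (norm_add_le _ _).trans ?_
          rw [norm_mul]
      _ ≤ M*h*h*h*h + (h^2/2) * (10*M*h^2) + (h^3/6) * (18*M*h) := by
          refine add_le_add (add_le_add (b0 t ht) ?_) ?_
          · exact mul_le_mul hnt2 nX (norm_nonneg _) (by positivity)
          · exact mul_le_mul hnt3 nY (norm_nonneg _) (by positivity)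
      _ = 9 * M * h^4 := by ring

lemma expc_deriv (lc : ℂ) (t : ℝ) :
    HasDerivAt (fun τ : ℝ => Complex.exp (lc * τ)) (lc * Complex.exp (lc * t)) t := by
  have H : HasDerivAt (fun z : ℂ => Complex.exp (lc * z)) (lc * Complex.exp (lc * t)) (t:ℂ) := by
    have := ((hasDerivAt_id (t:ℂ)).const_mul lc).cexp
    refine this.congr_deriv ?_
    simp [mul_comm]
  exact H.comp_ofReal

lemma ibp_step {h : ℝ} (hh : 0 < h) {f f' : ℝ → ℂ}
    (hcf : ContinuousOn f (Icc 0 h)) (hcf' : ContinuousOn f' (Icc 0 h))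
    (hdf : ∀ t ∈ Icc (0:ℝ) h, HasDerivWithinAt f (f' t) (Icc 0 h) t)
    (hf0 : f 0 = 0) (hfh : f h = 0) {lc : ℂ} (hlc : lc ≠ 0) (w : ℂ) :
    ∫ τ in (0:ℝ)..h, f τ * (Complex.exp (lc * τ) * w) =
      - ∫ τ in (0:ℝ)..h, f' τ * (Complex.exp (lc * τ) * (w / lc)) := by
  have hEc : Continuous fun τ : ℝ => Complex.exp (lc * τ) :=
    Complex.continuous_exp.comp (continuous_const.mul Complex.continuous_ofReal)
  set P : ℝ → ℂ := fun τ => f τ * (Complex.exp (lc * τ) * (w / lc)) with hP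
  have hdP : ∀ t ∈ Icc (0:ℝ) h, HasDerivWithinAt P
      (f' t * (Complex.exp (lc * t) * (w / lc)) + f t * (Complex.exp (lc * t) * w))
      (Icc 0 h) t := by
    intro t ht
    have := (hdf t ht).mul (((expc_deriv lc t).mul_const (w / lc)).hasDerivWithinAt)
    refine this.congr_deriv ?_
    field_simp
  have hcP : ContinuousOn P (Icc 0 h) :=
    hcf.mul ((hEc.mul continuous_const).continuousOn)
  have hcInt1 : ContinuousOn (fun τ => f' τ * (Complex.exp (lc * τ) * (w / lc))) (Icc 0 h) :=
    hcf'.mul ((hEc.mul continuous_const).continuousOn)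
  have hcInt2 : ContinuousOn (fun τ => f τ * (Complex.exp (lc * τ) * w)) (Icc 0 h) :=
    hcf.mul ((hEc.mul continuous_const).continuousOn)
  have hftc := ftc_aux hcP (hcInt1.add hcInt2) hdP h ⟨hh.le, le_rfl⟩
  have hP0 : P 0 = 0 := by simp [hP, hf0]
  have hPh : P h = 0 := by simp [hP, hfh]
  rw [hP0, hPh, sub_zero] at hftc
  have hint1 : IntervalIntegrable (fun τ => f' τ * (Complex.exp (lc * τ) * (w / lc)))
      MeasureTheory.volume 0 h := by
    apply ContinuousOn.intervalIntegrable
    rwa [uIcc_of_le hh.le]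
  have hint2 : IntervalIntegrable (fun τ => f τ * (Complex.exp (lc * τ) * w))
      MeasureTheory.volume 0 h := by
    apply ContinuousOn.intervalIntegrable
    rwa [uIcc_of_le hh.le]
  simp only [Pi.add_apply] at hftc
  rw [intervalIntegral.integral_add hint1 hint2] at hftc
  linear_combination hftc

lemma cubic_derivR (a b c d : ℂ) (t : ℝ) :
    HasDerivAt (fun u : ℝ => a + b*u + c*u^2 + d*u^3) (b + 2*c*t + 3*d*t^2) t := by
  have H : HasDerivAt (fun z : ℂ => a + b*z + c*z^2 + d*z^3) (b + 2*c*t + 3*d*t^2) (t:ℂ) := by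
    have := ((((hasDerivAt_id ((t:ℝ):ℂ)).const_mul b).const_add a).add
      ((hasDerivAt_pow 2 ((t:ℝ):ℂ)).const_mul c)).add ((hasDerivAt_pow 3 ((t:ℝ):ℂ)).const_mul d)
    refine this.congr_deriv ?_
    push_cast
    ring
  exact H.comp_ofReal

lemma quad_derivR (b c d : ℂ) (t : ℝ) :
    HasDerivAt (fun u : ℝ => b + 2*c*u + 3*d*u^2) (2*c + 6*d*t) t := by
  have H : HasDerivAt (fun z : ℂ => b + 2*c*z + 3*d*z^2) (2*c + 6*d*t) (t:ℂ) := by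
    have := (((hasDerivAt_id ((t:ℝ):ℂ)).const_mul (2*c)).const_add b).add
      ((hasDerivAt_pow 2 ((t:ℝ):ℂ)).const_mul (3*d))
    refine this.congr_deriv ?_
    push_cast
    ring
  exact H.comp_ofReal

lemma lin_derivR (c d : ℂ) (t : ℝ) :
    HasDerivAt (fun u : ℝ => 2*c + 6*d*u) (6*d) t := by
  have H : HasDerivAt (fun z : ℂ => 2*c + 6*d*z) (6*d) (t:ℂ) := by
    have := ((hasDerivAt_id ((t:ℝ):ℂ)).const_mul (6*d)).const_add (2*c)
    refine this.congr_deriv ?_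
    ring
  exact H.comp_ofReal

theorem filon_hermite_full_bound (M : ℝ) (hM0 : 0 ≤ M) :
    ∃ C : ℝ, 0 < C ∧
      ∀ (h : ℝ), 0 < h → ∀ (F p : ℝ → ℂ),
        ContDiffOn ℝ 4 F (Icc (0:ℝ) h) →
        (∀ k ≤ 4, ∀ τ ∈ Icc (0:ℝ) h,
          ‖iteratedDerivWithin k F (Icc (0:ℝ) h) τ‖ ≤ M) →
        -- p is a cubic polynomial
        (∃ a b c d : ℂ, ∀ τ : ℝ, p τ = a + b * τ + c * τ ^ 2 + d * τ ^ 3) →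
        -- Hermite interpolation conditions at the endpoints
        p 0 = F 0 → p h = F h →
        deriv p 0 = derivWithin F (Icc (0:ℝ) h) 0 →
        deriv p h = derivWithin F (Icc (0:ℝ) h) h →
        ∀ (ω : ℝ), 0 < ω → ∀ (n : ℤ), n ≠ 0 →
          ‖∫ τ in (0:ℝ)..h, (F τ - p τ) * Complex.exp (Complex.I * n * ω * τ)‖ ≤
            C * min (h ^ 5) (h ^ 3 / ω ^ 2) := by
  refine ⟨29 * M + 1, by positivity, ?_⟩
  intro h hh F p hF hbd hpoly hA hB hC hD ω hω n hn
  obtain ⟨a, b, c, d, hp⟩ := hpoly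
  have hpfun : p = fun τ : ℝ => a + b * τ + c * τ ^ 2 + d * τ ^ 3 := funext hp
  subst hpfun
  have hs : UniqueDiffOn ℝ (Icc (0:ℝ) h) := uniqueDiffOn_Icc hh
  have h0mem : (0:ℝ) ∈ Icc (0:ℝ) h := ⟨le_rfl, hh.le⟩
  have hhmem : h ∈ Icc (0:ℝ) h := ⟨hh.le, le_rfl⟩
  -- derivative chain for F
  have hdF : ∀ k : ℕ, k < 4 → ∀ t ∈ Icc (0:ℝ) h,
      HasDerivWithinAt (iteratedDerivWithin k F (Icc (0:ℝ) h))
        (iteratedDerivWithin (k+1) F (Icc (0:ℝ) h) t) (Icc (0:ℝ) h) t := by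
    intro k hk t ht
    have hdiff : DifferentiableOn ℝ (iteratedDerivWithin k F (Icc (0:ℝ) h)) (Icc (0:ℝ) h) :=
      hF.differentiableOn_iteratedDerivWithin (by exact_mod_cast hk) hs
    rw [iteratedDerivWithin_succ]
    exact (hdiff t ht).hasDerivWithinAt
  have hcontF : ∀ k : ℕ, k ≤ 4 →
      ContinuousOn (iteratedDerivWithin k F (Icc (0:ℝ) h)) (Icc (0:ℝ) h) := by
    intro k hk
    exact hF.continuousOn_iteratedDerivWithin (by exact_mod_cast hk) hs
  -- error functions
  set e0 : ℝ → ℂ := fun t => F t - (a + b*t + c*t^2 + d*t^3) with he0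
  set e1 : ℝ → ℂ := fun t => iteratedDerivWithin 1 F (Icc (0:ℝ) h) t - (b + 2*c*t + 3*d*t^2)
    with he1
  set e2 : ℝ → ℂ := fun t => iteratedDerivWithin 2 F (Icc (0:ℝ) h) t - (2*c + 6*d*t) with he2
  set e3 : ℝ → ℂ := fun t => iteratedDerivWithin 3 F (Icc (0:ℝ) h) t - 6*d with he3
  set e4 : ℝ → ℂ := fun t => iteratedDerivWithin 4 F (Icc (0:ℝ) h) t with he4
  have hpc : Continuous fun t : ℝ => (a + b*t + c*t^2 + d*t^3 : ℂ) := by fun_prop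
  have hqc : Continuous fun t : ℝ => (b + 2*c*t + 3*d*t^2 : ℂ) := by fun_prop
  have hlc' : Continuous fun t : ℝ => (2*c + 6*d*t : ℂ) := by fun_prop
  have hcF0 : ContinuousOn F (Icc (0:ℝ) h) := hF.continuousOn
  have hc0 : ContinuousOn e0 (Icc (0:ℝ) h) := hcF0.sub hpc.continuousOn
  have hc1 : ContinuousOn e1 (Icc (0:ℝ) h) := (hcontF 1 (by norm_num)).sub hqc.continuousOn
  have hc2 : ContinuousOn e2 (Icc (0:ℝ) h) := (hcontF 2 (by norm_num)).sub hlc'.continuousOn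
  have hc3 : ContinuousOn e3 (Icc (0:ℝ) h) := (hcontF 3 (by norm_num)).sub continuousOn_const
  have hc4 : ContinuousOn e4 (Icc (0:ℝ) h) := hcontF 4 le_rfl
  have hde0 : ∀ t ∈ Icc (0:ℝ) h, HasDerivWithinAt e0 (e1 t) (Icc (0:ℝ) h) t := by
    intro t ht
    have hF0 := hdF 0 (by norm_num) t ht
    rw [iteratedDerivWithin_zero] at hF0
    exact hF0.sub (cubic_derivR a b c d t).hasDerivWithinAt
  have hde1 : ∀ t ∈ Icc (0:ℝ) h, HasDerivWithinAt e1 (e2 t) (Icc (0:ℝ) h) t := by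
    intro t ht
    exact (hdF 1 (by norm_num) t ht).sub (quad_derivR b c d t).hasDerivWithinAt
  have hde2 : ∀ t ∈ Icc (0:ℝ) h, HasDerivWithinAt e2 (e3 t) (Icc (0:ℝ) h) t := by
    intro t ht
    exact (hdF 2 (by norm_num) t ht).sub (lin_derivR c d t).hasDerivWithinAt
  have hde3 : ∀ t ∈ Icc (0:ℝ) h, HasDerivWithinAt e3 (e4 t) (Icc (0:ℝ) h) t := by
    intro t ht
    have := (hdF 3 (by norm_num) t ht).sub_const (6*d)
    simpa [he3, he4] using this
  have hb4 : ∀ t ∈ Icc (0:ℝ) h, ‖e4 t‖ ≤ M := fun t ht => hbd 4 le_rfl t ht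
  -- boundary conditions
  have h00 : e0 0 = 0 := by
    simp only [he0]
    simp only at hA
    push_cast
    rw [sub_eq_zero]
    push_cast at hA
    linear_combination -hA
  have h0h : e0 h = 0 := by
    simp only [he0]
    simp only at hB
    rw [sub_eq_zero]
    exact hB.symm
  have hderivp : ∀ t : ℝ, deriv (fun τ : ℝ => a + b * τ + c * τ ^ 2 + d * τ ^ 3) t
      = b + 2*c*t + 3*d*t^2 := fun t => (cubic_derivR a b c d t).deriv
  have h10 : e1 0 = 0 := by
    simp only [he1]
    rw [iteratedDerivWithin_one, ← hC, hderivp 0]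
    push_cast
    ring
  have h1h : e1 h = 0 := by
    simp only [he1]
    rw [iteratedDerivWithin_one, ← hD, hderivp h]
    ring
  obtain ⟨sup2, sup0⟩ := core_bounds hh hM0 hc0 hc1 hc2 hc3 hc4 hde0 hde1 hde2 hde3 hb4
    h00 h0h h10 h1h
  -- the oscillator
  set lc : ℂ := Complex.I * (n:ℂ) * (ω:ℂ) with hlcdef
  have hlc0 : lc ≠ 0 := by
    apply mul_ne_zero (mul_ne_zero Complex.I_ne_zero ?_) ?_
    · exact_mod_cast (Int.cast_ne_zero (α := ℂ)).mpr hn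
    · exact_mod_cast Complex.ofReal_ne_zero.mpr hω.ne'
  have hexp1 : ∀ x : ℝ, ‖Complex.exp (lc * x)‖ = 1 := by
    intro x
    have harg : lc * (x:ℂ) = (((n:ℝ) * ω * x : ℝ) : ℂ) * Complex.I := by
      rw [hlcdef]; push_cast; ring
    rw [harg, Complex.norm_exp_ofReal_mul_I]
  have hgoal : (∫ τ in (0:ℝ)..h,
        (F τ - (fun τ : ℝ => a + b * τ + c * τ ^ 2 + d * τ ^ 3) τ)
          * Complex.exp (Complex.I * n * ω * τ))
      = ∫ τ in (0:ℝ)..h, e0 τ * Complex.exp (lc * τ) := by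
    apply intervalIntegral.integral_congr
    intro x hx
    simp only [he0, hlcdef]
  rw [hgoal]
  -- good bound 1
  have bnd1 : ‖∫ τ in (0:ℝ)..h, e0 τ * Complex.exp (lc * τ)‖ ≤ 9*M*h^4 * h := by
    have := intervalIntegral.norm_integral_le_of_norm_le_const (C := 9*M*h^4)
      (f := fun τ => e0 τ * Complex.exp (lc * τ)) (a := (0:ℝ)) (b := h) ?_
    · rwa [sub_zero, _root_.abs_of_pos hh] at this
    · intro x hx
      rw [uIoc_of_le hh.le] at hx
      rw [norm_mul, hexp1 x, mul_one]
      exact sup0 x ⟨hx.1.le, hx.2⟩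
  -- good bound 2 via integration by parts
  have ibp1 := ibp_step hh hc0 hc1 hde0 h00 h0h hlc0 1
  have ibp2 := ibp_step hh hc1 hc2 hde1 h10 h1h hlc0 (1/lc)
  have hrw1 : (∫ τ in (0:ℝ)..h, e0 τ * Complex.exp (lc * τ))
      = ∫ τ in (0:ℝ)..h, e0 τ * (Complex.exp (lc * τ) * 1) := by
    apply intervalIntegral.integral_congr
    intro x hx
    simp
  have keyeq : (∫ τ in (0:ℝ)..h, e0 τ * Complex.exp (lc * τ))
      = ∫ τ in (0:ℝ)..h, e2 τ * (Complex.exp (lc * τ) * (1/lc/lc)) := by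
    rw [hrw1, ibp1, ibp2, neg_neg]
  have hlcnorm : ω ≤ ‖lc‖ := by
    rw [hlcdef, norm_mul, norm_mul, Complex.norm_I, one_mul]
    have h1 : (1:ℝ) ≤ ‖(n:ℂ)‖ := by
      rw [Complex.norm_intCast]
      exact_mod_cast Int.one_le_abs hn
    have h2 : ‖(ω:ℂ)‖ = ω := by
      rw [Complex.norm_real, Real.norm_eq_abs, _root_.abs_of_pos hω]
    rw [h2]
    nlinarith
  have hlcpos : 0 < ‖lc‖ := lt_of_lt_of_le hω hlcnorm
  have bnd2 : ‖∫ τ in (0:ℝ)..h, e0 τ * Complex.exp (lc * τ)‖ ≤ 29*M*h^2/ω^2 * h := by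
    rw [keyeq]
    have := intervalIntegral.norm_integral_le_of_norm_le_const (C := 29*M*h^2/ω^2)
      (f := fun τ => e2 τ * (Complex.exp (lc * τ) * (1/lc/lc))) (a := (0:ℝ)) (b := h) ?_
    · rwa [sub_zero, _root_.abs_of_pos hh] at this
    · intro x hx
      rw [uIoc_of_le hh.le] at hx
      rw [norm_mul, norm_mul, hexp1 x, one_mul, norm_div, norm_div, norm_one]
      have hb2 := sup2 x ⟨hx.1.le, hx.2⟩
      have hle : 1/‖lc‖/‖lc‖ ≤ 1/ω^2 := by
        rw [div_div, one_div, one_div]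
        apply inv_anti₀ (by positivity)
        calc ω^2 = ω * ω := sq ω
          _ ≤ ‖lc‖ * ‖lc‖ := mul_le_mul hlcnorm hlcnorm hω.le (norm_nonneg _)
      calc ‖e2 x‖ * (1/‖lc‖/‖lc‖) ≤ (29*M*h^2) * (1/ω^2) := by
            apply mul_le_mul hb2 hle (by positivity) (by positivity)
        _ = 29*M*h^2/ω^2 := by ring
  -- conclude
  rcases le_total (h^5) (h^3/ω^2) with hmin | hmin
  · rw [min_eq_left hmin]
    calc ‖∫ τ in (0:ℝ)..h, e0 τ * Complex.exp (lc * τ)‖ ≤ 9*M*h^4 * h := bnd1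
      _ ≤ (29*M + 1) * h^5 := by nlinarith [pow_pos hh 5]
  · rw [min_eq_right hmin]
    calc ‖∫ τ in (0:ℝ)..h, e0 τ * Complex.exp (lc * τ)‖ ≤ 29*M*h^2/ω^2 * h := bnd2
      _ ≤ (29*M + 1) * (h^3/ω^2) := by
          have hnum : 29*M*h^2*h ≤ (29*M+1)*h^3 := by nlinarith [pow_pos hh 3]
          calc 29*M*h^2/ω^2*h = (29*M*h^2*h)/ω^2 := by ring
            _ ≤ ((29*M+1)*h^3)/ω^2 := by gcongr
            _ = (29*M+1)*(h^3/ω^2) := by ring
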